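/- Along any solution of the primal-dual flow, the quantity ξ(t) := λ(t) - β(t)^{-1}(A x(t) - b) is constant in time: ξ'(t) = 0 for all t ≥ 0, hence ξ(t) = ξ(0). -/

import Mathlib

open Real

/-- Along any solution of the primal-dual flow
γx' = -∇ₓL(x,λ), βλ' = A(x+x') - b with β' = -β, the quantity
ξ(t) = λ(t) - β(t)⁻¹(Ax(t) - b) is constant: ξ'(t) = 0 and ξ(t) = ξ(0). -/
theorem stmt2 {n m : ℕ}
    (A : EuclideanSpace ℝ (Fin n) →L[ℝ] EuclideanSpace ℝ (Fin m))
    (b : EuclideanSpace ℝ (Fin m))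
    (f : EuclideanSpace ℝ (Fin n) → ℝ)
    (f' : EuclideanSpace ℝ (Fin n) → EuclideanSpace ℝ (Fin n))
    (hf : ∀ z, HasGradientAt f (f' z) z)
    (x x' : ℝ → EuclideanSpace ℝ (Fin n))
    (lam lam' : ℝ → EuclideanSpace ℝ (Fin m))
    (γ β : ℝ → ℝ)
    (hβpos : ∀ t ≥ (0:ℝ), 0 < β t)
    (hβ : ∀ t ≥ (0:ℝ), HasDerivAt β (-β t) t)
    (hx : ∀ t ≥ (0:ℝ), HasDerivAt x (x' t) t)
    (hlam : ∀ t ≥ (0:ℝ), HasDerivAt lam (lam' t) t)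
    (hflow1 : ∀ t ≥ (0:ℝ), γ t • x' t = -(f' (x t) + A.adjoint (lam t)))
    (hflow2 : ∀ t ≥ (0:ℝ), β t • lam' t = A (x t + x' t) - b) :
    ∀ t ≥ (0:ℝ),
      HasDerivAt (fun s => lam s - (β s)⁻¹ • (A (x s) - b)) 0 t ∧
      lam t - (β t)⁻¹ • (A (x t) - b) = lam 0 - (β 0)⁻¹ • (A (x 0) - b) := by

  have key : ∀ t ≥ (0:ℝ), HasDerivAt (fun s => lam s - (β s)⁻¹ • (A (x s) - b)) 0 t := by
    intro t ht
    have hβt := hβpos t ht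
    have hinv : HasDerivAt (fun s => (β s)⁻¹) ((β t)⁻¹) t := by
      have := (hβ t ht).inv (ne_of_gt hβt)
      refine this.congr_deriv ?_
      rw [neg_neg, pow_two, div_mul_eq_div_div, div_self (ne_of_gt hβt)]
      ring
    have hAx : HasDerivAt (fun s => A (x s) - b) (A (x' t)) t := by
      simpa using (A.hasFDerivAt.comp_hasDerivAt t (hx t ht)).sub_const b
    have hsmul := hinv.smul hAx
    have hlam' : lam' t = (β t)⁻¹ • (A (x t) + A (x' t) - b) := by
      have h2 := hflow2 t ht
      rw [map_add] at h2
      calc lam' t = (β t)⁻¹ • (β t • lam' t) := by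
            rw [smul_smul, inv_mul_cancel₀ (ne_of_gt hβt), one_smul]
        _ = (β t)⁻¹ • (A (x t) + A (x' t) - b) := by rw [h2]
    have := (hlam t ht).sub hsmul
    refine this.congr_deriv ?_
    rw [hlam']
    simp only [smul_sub, smul_add]
    abel
  intro t ht
  refine ⟨key t ht, ?_⟩
  have hcont : ContinuousOn (fun s => lam s - (β s)⁻¹ • (A (x s) - b)) (Set.Icc 0 t) := by
    intro s hs
    exact ((key s hs.1).continuousAt).continuousWithinAt
  have hderiv : ∀ s ∈ Set.Ico (0:ℝ) t,
      HasDerivWithinAt (fun s => lam s - (β s)⁻¹ • (A (x s) - b)) 0 (Set.Ici s) s :=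
    fun s hs => (key s hs.1).hasDerivWithinAt
  exact constant_of_has_deriv_right_zero hcont hderiv t ⟨ht, le_refl t⟩
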